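/- Let F be a field of characteristic zero containing elements q, z with q not a root of unity, and let D̃ be the F-algebra generated by u^{±1} (representing w_1^{1/2} w_2^{-1/2}), D_1^{±1}, D_2^{±1} with relations [D_1,D_2]=0, D_1 u = q u D_1, D_2 u = q^{-1} u D_2. Then the assignment u ↦ X, D_1 ↦ -q^{-1} X^{-2} ϖ, D_2 ↦ -q^{-1} X^{2} ϖ^{-1} defines an F-algebra homomorphism from D̃/(D_1 D_2 - 1) to End F(X), where (ϖf)(X) = f(qX), and this homomorphism is injective. -/

import Mathlib

noncomputable section

/-- Generators of `D̃`: `0 = u, 1 = u⁻¹, 2 = D₁, 3 = D₁⁻¹, 4 = D₂, 5 = D₂⁻¹`. -/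
def g9 (F : Type*) [Field F] (i : Fin 6) : FreeAlgebra F (Fin 6) := FreeAlgebra.ι F i

/-- The relations of `D̃/(D₁D₂ - 1)`: invertibility of the generators, `[D₁,D₂]=0`,
`D₁u = q·uD₁`, `D₂u = q⁻¹·uD₂`, and the quotient relation `D₁D₂ = 1`. -/
inductive Rel9 (F : Type*) [Field F] (q : F) :
    FreeAlgebra F (Fin 6) → FreeAlgebra F (Fin 6) → Prop
  | u_inv : Rel9 F q (g9 F 0 * g9 F 1) 1
  | inv_u : Rel9 F q (g9 F 1 * g9 F 0) 1
  | d1_inv : Rel9 F q (g9 F 2 * g9 F 3) 1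
  | inv_d1 : Rel9 F q (g9 F 3 * g9 F 2) 1
  | d2_inv : Rel9 F q (g9 F 4 * g9 F 5) 1
  | inv_d2 : Rel9 F q (g9 F 5 * g9 F 4) 1
  | comm : Rel9 F q (g9 F 2 * g9 F 4) (g9 F 4 * g9 F 2)
  | qcomm1 : Rel9 F q (g9 F 2 * g9 F 0)
      (algebraMap F (FreeAlgebra F (Fin 6)) q * (g9 F 0 * g9 F 2))
  | qcomm2 : Rel9 F q (g9 F 4 * g9 F 0)
      (algebraMap F (FreeAlgebra F (Fin 6)) q⁻¹ * (g9 F 0 * g9 F 4))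
  | quot : Rel9 F q (g9 F 2 * g9 F 4) 1


namespace CoulombAux

variable {F : Type*} [Field F]

/-- `op r σ` is the endomorphism `f ↦ r * σ f` of `F(X)`. -/
def op (r : RatFunc F) (σ : RatFunc F ≃ₐ[F] RatFunc F) : Module.End F (RatFunc F) :=
  LinearMap.mulLeft F r ∘ₗ σ.toLinearMap

lemma op_apply (r : RatFunc F) (σ : RatFunc F ≃ₐ[F] RatFunc F) (f : RatFunc F) :
    op r σ f = r * σ f := rfl

lemma op_mul (r r' : RatFunc F) (σ σ' : RatFunc F ≃ₐ[F] RatFunc F) :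
    op r σ * op r' σ' = op (r * σ r') (σ * σ') := by
  apply LinearMap.ext; intro f
  simp [op, Module.End.mul_apply, AlgEquiv.mul_apply, map_mul, mul_assoc]

/-- Monomial operator `f ↦ (μ X^k) * ϖ^b f`. -/
def W (ϖ : RatFunc F ≃ₐ[F] RatFunc F) (μ : F) (k b : ℤ) : Module.End F (RatFunc F) :=
  op (algebraMap F (RatFunc F) μ * RatFunc.X ^ k) (ϖ ^ b)

lemma W_congr (ϖ : RatFunc F ≃ₐ[F] RatFunc F) {μ μ' : F} {k k' b b' : ℤ}
    (h1 : μ = μ') (h2 : k = k') (h3 : b = b') : W ϖ μ k b = W ϖ μ' k' b' := by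
  subst h1; subst h2; subst h3; rfl

variable {q : F} {ϖ : RatFunc F ≃ₐ[F] RatFunc F}

lemma symm_X (hq0 : q ≠ 0)
    (hϖ : ϖ RatFunc.X = algebraMap F (RatFunc F) q * RatFunc.X) :
    ϖ.symm RatFunc.X = algebraMap F (RatFunc F) q⁻¹ * RatFunc.X := by
  have h := congrArg ϖ.symm hϖ
  rw [AlgEquiv.symm_apply_apply, map_mul, AlgEquiv.commutes] at h
  have hcq : (algebraMap F (RatFunc F)) q ≠ 0 := by
    simpa using hq0
  rw [map_inv₀, eq_inv_mul_iff_mul_eq₀ hcq]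
  exact h.symm

lemma zpow_X (hq0 : q ≠ 0)
    (hϖ : ϖ RatFunc.X = algebraMap F (RatFunc F) q * RatFunc.X) (b : ℤ) :
    (ϖ ^ b) RatFunc.X = algebraMap F (RatFunc F) (q ^ b) * RatFunc.X := by
  induction b using Int.induction_on with
  | zero => simp
  | succ i ih =>
      rw [zpow_add_one, AlgEquiv.mul_apply, hϖ, map_mul, AlgEquiv.commutes, ih,
        zpow_add_one₀ hq0, map_mul]
      ring
  | pred i ih =>
      rw [zpow_sub_one, AlgEquiv.mul_apply]
      have : (ϖ⁻¹ : RatFunc F ≃ₐ[F] RatFunc F) RatFunc.X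
          = algebraMap F (RatFunc F) q⁻¹ * RatFunc.X := symm_X hq0 hϖ
      rw [this, map_mul, AlgEquiv.commutes, ih, zpow_sub_one₀ hq0, map_mul, map_inv₀]
      ring

lemma zpow_monomial (hq0 : q ≠ 0)
    (hϖ : ϖ RatFunc.X = algebraMap F (RatFunc F) q * RatFunc.X) (b : ℤ) (μ : F) (k : ℤ) :
    (ϖ ^ b) (algebraMap F (RatFunc F) μ * RatFunc.X ^ k)
      = algebraMap F (RatFunc F) (μ * q ^ (b * k)) * RatFunc.X ^ k := by
  rw [map_mul, AlgEquiv.commutes, map_zpow₀, zpow_X hq0 hϖ, mul_zpow, ← map_zpow₀,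
    ← zpow_mul, map_mul]
  ring

lemma W_mul (hq0 : q ≠ 0)
    (hϖ : ϖ RatFunc.X = algebraMap F (RatFunc F) q * RatFunc.X)
    (μ μ' : F) (k k' b b' : ℤ) :
    W ϖ μ k b * W ϖ μ' k' b' = W ϖ (μ * (μ' * q ^ (b * k'))) (k + k') (b + b') := by
  rw [W, W, op_mul, zpow_monomial hq0 hϖ, ← zpow_add]
  congr 1
  rw [zpow_add₀ (RatFunc.X_ne_zero)]
  simp only [map_mul]
  ring

lemma W_one : W ϖ 1 0 0 = (1 : Module.End F (RatFunc F)) := by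
  apply LinearMap.ext; intro f
  simp [W, op_apply]

lemma W_smul (μ : F) (k b : ℤ) : W ϖ μ k b = μ • W ϖ 1 k b := by
  apply LinearMap.ext; intro f
  simp [W, op_apply, Algebra.smul_def]
  ring

lemma W_apply (μ : F) (k b : ℤ) (f : RatFunc F) :
    W ϖ μ k b f = algebraMap F (RatFunc F) μ * RatFunc.X ^ k * (ϖ ^ b) f := rfl


section Units

variable (hq0 : q ≠ 0) (hϖ : ϖ RatFunc.X = algebraMap F (RatFunc F) q * RatFunc.X)

/-- The image of `u` as a unit. -/
def OXu : (Module.End F (RatFunc F))ˣ where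
  val := W ϖ 1 1 0
  inv := W ϖ 1 (-1) 0
  val_inv := by rw [W_mul hq0 hϖ]; norm_num [W_one]
  inv_val := by rw [W_mul hq0 hϖ]; norm_num [W_one]

/-- The image of `D₁` as a unit. -/
def EDu : (Module.End F (RatFunc F))ˣ where
  val := W ϖ (-q⁻¹) (-2) 1
  inv := W ϖ (-q⁻¹) 2 (-1)
  val_inv := by
    rw [W_mul hq0 hϖ, show -q⁻¹ * (-q⁻¹ * q ^ ((1:ℤ) * 2)) = 1 by
      norm_num [zpow_two]; field_simp]
    norm_num [W_one]
  inv_val := by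
    rw [W_mul hq0 hϖ, show -q⁻¹ * (-q⁻¹ * q ^ ((-1:ℤ) * -2)) = 1 by
      norm_num [zpow_two]; field_simp]
    norm_num [W_one]

lemma OXu_zpow (a : ℤ) :
    ((OXu hq0 hϖ ^ a : (Module.End F (RatFunc F))ˣ) : Module.End F (RatFunc F))
      = W ϖ 1 a 0 := by
  induction a using Int.induction_on with
  | zero => norm_num [W_one]
  | succ i ih =>
      rw [zpow_add_one, Units.val_mul, ih, show ((OXu hq0 hϖ : (Module.End F (RatFunc F))ˣ) : Module.End F (RatFunc F)) = W ϖ 1 1 0 from rfl, W_mul hq0 hϖ]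
      exact W_congr ϖ (by norm_num) rfl (by ring)
  | pred i ih =>
      rw [zpow_sub_one, Units.val_mul, ih, show ((((OXu hq0 hϖ)⁻¹ : (Module.End F (RatFunc F))ˣ)) : Module.End F (RatFunc F)) = W ϖ 1 (-1) 0 from rfl, W_mul hq0 hϖ]
      exact W_congr ϖ (by norm_num) rfl (by ring)

lemma EDu_zpow (b : ℤ) :
    ∃ μ : F, μ ≠ 0 ∧
      ((EDu hq0 hϖ ^ b : (Module.End F (RatFunc F))ˣ) : Module.End F (RatFunc F))
        = W ϖ μ (-(2 * b)) b := by
  induction b using Int.induction_on with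
  | zero => exact ⟨1, one_ne_zero, by norm_num [W_one]⟩
  | succ i ih =>
      obtain ⟨μ, hμ, h⟩ := ih
      refine ⟨μ * (-q⁻¹ * q ^ ((i:ℤ) * -2)), ?_, ?_⟩
      · have := zpow_ne_zero ((i:ℤ) * -2) hq0
        have hqi : -q⁻¹ ≠ 0 := by simpa using hq0
        exact mul_ne_zero hμ (mul_ne_zero hqi this)
      · rw [zpow_add_one, Units.val_mul, h,
          show ((EDu hq0 hϖ : (Module.End F (RatFunc F))ˣ) : Module.End F (RatFunc F)) = W ϖ (-q⁻¹) (-2) 1 from rfl, W_mul hq0 hϖ]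
        exact W_congr ϖ (by ring) (by ring) rfl
  | pred i ih =>
      obtain ⟨μ, hμ, h⟩ := ih
      refine ⟨μ * (-q⁻¹ * q ^ ((-i:ℤ) * 2)), ?_, ?_⟩
      · have := zpow_ne_zero ((-i:ℤ) * 2) hq0
        have hqi : -q⁻¹ ≠ 0 := by simpa using hq0
        exact mul_ne_zero hμ (mul_ne_zero hqi this)
      · rw [zpow_sub_one, Units.val_mul, h,
          show ((((EDu hq0 hϖ)⁻¹ : (Module.End F (RatFunc F))ˣ)) : Module.End F (RatFunc F)) = W ϖ (-q⁻¹) 2 (-1) from rfl, W_mul hq0 hϖ]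
        exact W_congr ϖ (by ring) (by ring) rfl

end Units


section Lift

variable (F q ϖ)

/-- Images of the six generators. -/
def vimg : Fin 6 → Module.End F (RatFunc F)
  | 0 => W ϖ 1 1 0
  | 1 => W ϖ 1 (-1) 0
  | 2 => W ϖ (-q⁻¹) (-2) 1
  | 3 => W ϖ (-q⁻¹) 2 (-1)
  | 4 => W ϖ (-q⁻¹) 2 (-1)
  | 5 => W ϖ (-q⁻¹) (-2) 1

variable {F q ϖ}

lemma algebraMap_mul_W (s μ : F) (k b : ℤ) :
    algebraMap F (Module.End F (RatFunc F)) s * W ϖ μ k b = W ϖ (s * μ) k b := by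
  rw [Algebra.algebraMap_eq_smul_one, smul_mul_assoc, one_mul, W_smul (ϖ := ϖ) (μ := μ),
    smul_smul, ← W_smul]

lemma rel_hold (hq0 : q ≠ 0)
    (hϖ : ϖ RatFunc.X = algebraMap F (RatFunc F) q * RatFunc.X) :
    ∀ ⦃x y : FreeAlgebra F (Fin 6)⦄, Rel9 F q x y →
      FreeAlgebra.lift F (vimg F q ϖ) x = FreeAlgebra.lift F (vimg F q ϖ) y := by
  have hι : ∀ i : Fin 6, FreeAlgebra.lift F (vimg F q ϖ) (g9 F i) = vimg F q ϖ i := by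
    intro i; rw [g9, FreeAlgebra.lift_ι_apply]
  intro x y h
  cases h with
  | u_inv =>
      rw [map_mul, hι, hι, map_one]
      show W ϖ 1 1 0 * W ϖ 1 (-1) 0 = 1
      rw [W_mul hq0 hϖ]; norm_num [W_one]
  | inv_u =>
      rw [map_mul, hι, hι, map_one]
      show W ϖ 1 (-1) 0 * W ϖ 1 1 0 = 1
      rw [W_mul hq0 hϖ]; norm_num [W_one]
  | d1_inv =>
      rw [map_mul, hι, hι, map_one]
      show W ϖ (-q⁻¹) (-2) 1 * W ϖ (-q⁻¹) 2 (-1) = 1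
      rw [W_mul hq0 hϖ, show -q⁻¹ * (-q⁻¹ * q ^ ((1:ℤ) * 2)) = 1 by
        norm_num [zpow_two]; field_simp]
      norm_num [W_one]
  | inv_d1 =>
      rw [map_mul, hι, hι, map_one]
      show W ϖ (-q⁻¹) 2 (-1) * W ϖ (-q⁻¹) (-2) 1 = 1
      rw [W_mul hq0 hϖ, show -q⁻¹ * (-q⁻¹ * q ^ ((-1:ℤ) * -2)) = 1 by
        norm_num [zpow_two]; field_simp]
      norm_num [W_one]
  | d2_inv =>
      rw [map_mul, hι, hι, map_one]
      show W ϖ (-q⁻¹) 2 (-1) * W ϖ (-q⁻¹) (-2) 1 = 1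
      rw [W_mul hq0 hϖ, show -q⁻¹ * (-q⁻¹ * q ^ ((-1:ℤ) * -2)) = 1 by
        norm_num [zpow_two]; field_simp]
      norm_num [W_one]
  | inv_d2 =>
      rw [map_mul, hι, hι, map_one]
      show W ϖ (-q⁻¹) (-2) 1 * W ϖ (-q⁻¹) 2 (-1) = 1
      rw [W_mul hq0 hϖ, show -q⁻¹ * (-q⁻¹ * q ^ ((1:ℤ) * 2)) = 1 by
        norm_num [zpow_two]; field_simp]
      norm_num [W_one]
  | quot =>
      rw [map_mul, hι, hι, map_one]
      show W ϖ (-q⁻¹) (-2) 1 * W ϖ (-q⁻¹) 2 (-1) = 1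
      rw [W_mul hq0 hϖ, show -q⁻¹ * (-q⁻¹ * q ^ ((1:ℤ) * 2)) = 1 by
        norm_num [zpow_two]; field_simp]
      norm_num [W_one]
  | comm =>
      rw [map_mul, map_mul, hι, hι]
      show W ϖ (-q⁻¹) (-2) 1 * W ϖ (-q⁻¹) 2 (-1)
        = W ϖ (-q⁻¹) 2 (-1) * W ϖ (-q⁻¹) (-2) 1
      rw [W_mul hq0 hϖ, W_mul hq0 hϖ]
      exact W_congr ϖ (by norm_num) (by ring) (by ring)
  | qcomm1 =>
      rw [map_mul, map_mul, hι, hι, AlgHom.commutes, map_mul, hι, hι]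
      show W ϖ (-q⁻¹) (-2) 1 * W ϖ 1 1 0
        = algebraMap F (Module.End F (RatFunc F)) q * (W ϖ 1 1 0 * W ϖ (-q⁻¹) (-2) 1)
      rw [W_mul hq0 hϖ, W_mul hq0 hϖ, algebraMap_mul_W]
      refine W_congr ϖ ?_ (by ring) (by ring)
      norm_num [zpow_one]
      field_simp
  | qcomm2 =>
      rw [map_mul, map_mul, hι, hι, AlgHom.commutes, map_mul, hι, hι]
      show W ϖ (-q⁻¹) 2 (-1) * W ϖ 1 1 0
        = algebraMap F (Module.End F (RatFunc F)) q⁻¹ * (W ϖ 1 1 0 * W ϖ (-q⁻¹) 2 (-1))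
      rw [W_mul hq0 hϖ, W_mul hq0 hϖ, algebraMap_mul_W]
      refine W_congr ϖ ?_ (by ring) (by ring)
      norm_num [zpow_neg_one]

/-- The homomorphism `φ`. -/
def Φ (hq0 : q ≠ 0)
    (hϖ : ϖ RatFunc.X = algebraMap F (RatFunc F) q * RatFunc.X) :
    RingQuot (Rel9 F q) →ₐ[F] Module.End F (RatFunc F) :=
  RingQuot.liftAlgHom F ⟨FreeAlgebra.lift F (vimg F q ϖ), rel_hold hq0 hϖ⟩

lemma Φ_mk (hq0 : q ≠ 0)
    (hϖ : ϖ RatFunc.X = algebraMap F (RatFunc F) q * RatFunc.X) (i : Fin 6) :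
    Φ hq0 hϖ (RingQuot.mkAlgHom F (Rel9 F q) (g9 F i)) = vimg F q ϖ i := by
  rw [Φ, RingQuot.liftAlgHom_mkAlgHom_apply, g9, FreeAlgebra.lift_ι_apply]

end Lift


section Quot

variable (F q)

/-- Image of the `i`-th generator in the quotient. -/
def mka (i : Fin 6) : RingQuot (Rel9 F q) := RingQuot.mkAlgHom F (Rel9 F q) (g9 F i)

variable {F q}

lemma mk_mul_one {i j : Fin 6} (h : Rel9 F q (g9 F i * g9 F j) 1) :
    mka F q i * mka F q j = 1 := by
  have := RingQuot.mkAlgHom_rel F h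
  rw [map_mul, map_one] at this
  exact this

variable (F q)

/-- `u` as a unit. -/
def uu : (RingQuot (Rel9 F q))ˣ :=
  ⟨mka F q 0, mka F q 1, mk_mul_one Rel9.u_inv, mk_mul_one Rel9.inv_u⟩

/-- `D₁` as a unit. -/
def dd : (RingQuot (Rel9 F q))ˣ :=
  ⟨mka F q 2, mka F q 3, mk_mul_one Rel9.d1_inv, mk_mul_one Rel9.inv_d1⟩

variable {F q}

lemma mka4 : mka F q 4 = mka F q 3 := by
  calc mka F q 4 = (mka F q 3 * mka F q 2) * mka F q 4 := by
        rw [mk_mul_one Rel9.inv_d1, one_mul]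
    _ = mka F q 3 * (mka F q 2 * mka F q 4) := mul_assoc _ _ _
    _ = mka F q 3 := by rw [mk_mul_one Rel9.quot, mul_one]

lemma mka5 : mka F q 5 = mka F q 2 := by
  have h1 : mka F q 3 * mka F q 5 = 1 := by
    rw [← mka4]; exact mk_mul_one Rel9.d2_inv
  calc mka F q 5 = (mka F q 2 * mka F q 3) * mka F q 5 := by
        rw [mk_mul_one Rel9.d1_inv, one_mul]
    _ = mka F q 2 * (mka F q 3 * mka F q 5) := mul_assoc _ _ _
    _ = mka F q 2 := by rw [h1, mul_one]

lemma c01 (x : RingQuot (Rel9 F q)) : mka F q 0 * (mka F q 1 * x) = x := by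
  rw [← mul_assoc, mk_mul_one Rel9.u_inv, one_mul]

lemma c10 (x : RingQuot (Rel9 F q)) : mka F q 1 * (mka F q 0 * x) = x := by
  rw [← mul_assoc, mk_mul_one Rel9.inv_u, one_mul]

lemma c23 (x : RingQuot (Rel9 F q)) : mka F q 2 * (mka F q 3 * x) = x := by
  rw [← mul_assoc, mk_mul_one Rel9.d1_inv, one_mul]

lemma c32 (x : RingQuot (Rel9 F q)) : mka F q 3 * (mka F q 2 * x) = x := by
  rw [← mul_assoc, mk_mul_one Rel9.inv_d1, one_mul]

lemma hdu : mka F q 2 * mka F q 0 = q • (mka F q 0 * mka F q 2) := by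
  have := RingQuot.mkAlgHom_rel F (Rel9.qcomm1 (F := F) (q := q))
  rw [map_mul, map_mul, AlgHom.commutes] at this
  show RingQuot.mkAlgHom F (Rel9 F q) (g9 F 2) * RingQuot.mkAlgHom F (Rel9 F q) (g9 F 0)
    = q • (RingQuot.mkAlgHom F (Rel9 F q) (g9 F 0) * RingQuot.mkAlgHom F (Rel9 F q) (g9 F 2))
  rw [this, ← Algebra.smul_def, map_mul]

lemma hvd : mka F q 1 * mka F q 2 = q • (mka F q 2 * mka F q 1) := by
  have h2 := congrArg (fun x => mka F q 1 * x * mka F q 1) hdu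
  simp only [mul_assoc, mul_smul_comm, smul_mul_assoc] at h2
  rw [mk_mul_one Rel9.u_inv, mul_one, c10] at h2
  exact h2

lemma hdv (hq0 : q ≠ 0) : mka F q 2 * mka F q 1 = q⁻¹ • (mka F q 1 * mka F q 2) := by
  rw [hvd, smul_smul, inv_mul_cancel₀ hq0, one_smul]

lemma hue : mka F q 0 * mka F q 3 = q • (mka F q 3 * mka F q 0) := by
  have h2 := congrArg (fun x => mka F q 3 * x * mka F q 3) hdu
  simp only [mul_assoc, mul_smul_comm, smul_mul_assoc] at h2
  rw [mk_mul_one Rel9.d1_inv, mul_one, c32] at h2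
  exact h2

lemma heu (hq0 : q ≠ 0) : mka F q 3 * mka F q 0 = q⁻¹ • (mka F q 0 * mka F q 3) := by
  rw [hue, smul_smul, inv_mul_cancel₀ hq0, one_smul]

lemma hev (hq0 : q ≠ 0) : mka F q 3 * mka F q 1 = q • (mka F q 1 * mka F q 3) := by
  have h2 := congrArg (fun x => mka F q 3 * x * mka F q 3) (hdv hq0)
  simp only [mul_assoc, mul_smul_comm, smul_mul_assoc] at h2
  rw [mk_mul_one Rel9.d1_inv, mul_one, c32] at h2
  -- h2 : v * e = q⁻¹ • (e * v)
  rw [h2, smul_smul, mul_inv_cancel₀ hq0, one_smul]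

lemma d_comm_zpow (hq0 : q ≠ 0) (a : ℤ) :
    mka F q 2 * ((uu F q ^ a : _ˣ) : RingQuot (Rel9 F q))
      = q ^ a • (((uu F q ^ a : _ˣ) : RingQuot (Rel9 F q)) * mka F q 2) := by
  induction a using Int.induction_on with
  | zero => simp
  | succ i ih =>
      rw [zpow_add_one, Units.val_mul,
        show ((uu F q : _ˣ) : RingQuot (Rel9 F q)) = mka F q 0 from rfl,
        ← mul_assoc, ih, smul_mul_assoc, mul_assoc, hdu, mul_smul_comm, smul_smul,
        ← zpow_add_one₀ hq0, ← mul_assoc]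
  | pred i ih =>
      rw [zpow_sub_one, Units.val_mul,
        show (((uu F q)⁻¹ : _ˣ) : RingQuot (Rel9 F q)) = mka F q 1 from rfl,
        ← mul_assoc, ih, smul_mul_assoc, mul_assoc, hdv hq0, mul_smul_comm, smul_smul,
        ← zpow_sub_one₀ hq0, ← mul_assoc]

lemma e_comm_zpow (hq0 : q ≠ 0) (a : ℤ) :
    mka F q 3 * ((uu F q ^ a : _ˣ) : RingQuot (Rel9 F q))
      = q ^ (-a) • (((uu F q ^ a : _ˣ) : RingQuot (Rel9 F q)) * mka F q 3) := by
  induction a using Int.induction_on with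
  | zero => simp
  | succ i ih =>
      rw [zpow_add_one, Units.val_mul,
        show ((uu F q : _ˣ) : RingQuot (Rel9 F q)) = mka F q 0 from rfl,
        ← mul_assoc, ih, smul_mul_assoc, mul_assoc, heu hq0, mul_smul_comm, smul_smul,
        ← mul_assoc, show -((i : ℤ) + 1) = -i - 1 by ring, zpow_sub_one₀ hq0]
  | pred i ih =>
      rw [zpow_sub_one, Units.val_mul,
        show (((uu F q)⁻¹ : _ˣ) : RingQuot (Rel9 F q)) = mka F q 1 from rfl,
        ← mul_assoc, ih, smul_mul_assoc, mul_assoc, hev hq0, mul_smul_comm, smul_smul,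
        ← mul_assoc, show -(-(i : ℤ) - 1) = -(-i) + 1 by ring, zpow_add_one₀ hq0]

lemma dd_comm_zpow (hq0 : q ≠ 0) (b a : ℤ) :
    ((dd F q ^ b : _ˣ) : RingQuot (Rel9 F q)) * ((uu F q ^ a : _ˣ) : RingQuot (Rel9 F q))
      = q ^ (a * b) • (((uu F q ^ a : _ˣ) : RingQuot (Rel9 F q)) *
          ((dd F q ^ b : _ˣ) : RingQuot (Rel9 F q))) := by
  induction b using Int.induction_on with
  | zero => simp
  | succ i ih =>
      rw [zpow_add_one, Units.val_mul,
        show ((dd F q : _ˣ) : RingQuot (Rel9 F q)) = mka F q 2 from rfl,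
        mul_assoc, d_comm_zpow hq0, mul_smul_comm, ← mul_assoc, ih, smul_mul_assoc,
        smul_smul, mul_assoc, show a * ((i : ℤ) + 1) = a + a * i by ring,
        zpow_add₀ hq0]
  | pred i ih =>
      rw [zpow_sub_one, Units.val_mul,
        show (((dd F q)⁻¹ : _ˣ) : RingQuot (Rel9 F q)) = mka F q 3 from rfl,
        mul_assoc, e_comm_zpow hq0, mul_smul_comm, ← mul_assoc, ih, smul_mul_assoc,
        smul_smul, mul_assoc, show a * (-(i : ℤ) - 1) = -a + a * -i by ring,
        zpow_add₀ hq0]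

variable (F q)

/-- The monomial `u^a D₁^b` in the quotient. -/
def Mz (a b : ℤ) : RingQuot (Rel9 F q) :=
  ((uu F q ^ a : _ˣ) : RingQuot (Rel9 F q)) * ((dd F q ^ b : _ˣ) : RingQuot (Rel9 F q))

variable {F q}

lemma Mz_mul (hq0 : q ≠ 0) (a b a' b' : ℤ) :
    Mz F q a b * Mz F q a' b' = q ^ (a' * b) • Mz F q (a + a') (b + b') := by
  rw [Mz, Mz, Mz, mul_assoc, ← mul_assoc ((dd F q ^ b : _ˣ) : RingQuot (Rel9 F q)),
    dd_comm_zpow hq0, smul_mul_assoc, mul_smul_comm]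
  rw [show ((uu F q ^ a : _ˣ) : RingQuot (Rel9 F q)) *
      (((uu F q ^ a' : _ˣ) : RingQuot (Rel9 F q)) * ((dd F q ^ b : _ˣ) : RingQuot (Rel9 F q)) *
        ((dd F q ^ b' : _ˣ) : RingQuot (Rel9 F q)))
    = (((uu F q ^ a : _ˣ) : RingQuot (Rel9 F q)) * ((uu F q ^ a' : _ˣ) : RingQuot (Rel9 F q))) *
      (((dd F q ^ b : _ˣ) : RingQuot (Rel9 F q)) * ((dd F q ^ b' : _ˣ) : RingQuot (Rel9 F q)))
    by simp only [mul_assoc]]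
  congr 1
  rw [← Units.val_mul, ← Units.val_mul, ← zpow_add, ← zpow_add]

variable (F q)

/-- The span of the monomials. -/
def P9 : Submodule F (RingQuot (Rel9 F q)) :=
  Submodule.span F (Set.range fun p : ℤ × ℤ => Mz F q p.1 p.2)

variable {F q}

lemma P9_mul (hq0 : q ≠ 0) {x y : RingQuot (Rel9 F q)}
    (hx : x ∈ P9 F q) (hy : y ∈ P9 F q) : x * y ∈ P9 F q := by
  have hle : P9 F q * P9 F q ≤ P9 F q := by
    rw [P9, Submodule.span_mul_span, Submodule.span_le]
    rintro t ⟨t1, ⟨p, rfl⟩, t2, ⟨p', rfl⟩, rfl⟩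
    simp only
    rw [Mz_mul hq0]
    exact Submodule.smul_mem _ _
      (Submodule.subset_span ⟨(p.1 + p'.1, p.2 + p'.2), rfl⟩)
  exact hle (Submodule.mul_mem_mul hx hy)

lemma Mz_one : Mz F q 0 0 = 1 := by simp [Mz]

lemma P9_top (hq0 : q ≠ 0) (x : RingQuot (Rel9 F q)) : x ∈ P9 F q := by
  obtain ⟨y, rfl⟩ := RingQuot.mkAlgHom_surjective F (Rel9 F q) x
  refine FreeAlgebra.induction F (Fin 6)
    (motive := fun y => RingQuot.mkAlgHom F (Rel9 F q) y ∈ P9 F q) ?_ ?_ ?_ ?_ y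
  · intro r
    rw [AlgHom.commutes, Algebra.algebraMap_eq_smul_one, ← Mz_one]
    exact Submodule.smul_mem _ _ (Submodule.subset_span ⟨(0, 0), rfl⟩)
  · intro i
    have hmem : ∀ p : ℤ × ℤ, Mz F q p.1 p.2 ∈ P9 F q :=
      fun p => Submodule.subset_span ⟨p, rfl⟩
    have h0 : Mz F q 1 0 = mka F q 0 := by simp [Mz]; rfl
    have h1 : Mz F q (-1) 0 = mka F q 1 := by simp [Mz, zpow_neg_one]; rfl
    have h2 : Mz F q 0 1 = mka F q 2 := by simp [Mz]; rfl
    have h3 : Mz F q 0 (-1) = mka F q 3 := by simp [Mz, zpow_neg_one]; rfl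
    fin_cases i
    · show mka F q 0 ∈ P9 F q
      rw [← h0]; exact hmem (1, 0)
    · show mka F q 1 ∈ P9 F q
      rw [← h1]; exact hmem (-1, 0)
    · show mka F q 2 ∈ P9 F q
      rw [← h2]; exact hmem (0, 1)
    · show mka F q 3 ∈ P9 F q
      rw [← h3]; exact hmem (0, -1)
    · show mka F q 4 ∈ P9 F q
      rw [mka4, ← h3]; exact hmem (0, -1)
    · show mka F q 5 ∈ P9 F q
      rw [mka5, ← h2]; exact hmem (0, 1)
  · intro a b ha hb
    rw [map_mul]; exact P9_mul hq0 ha hb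
  · intro a b ha hb
    rw [map_add]; exact Submodule.add_mem _ ha hb

end Quot


section Indep

lemma LIfiber {ι κ M : Type*} [AddCommGroup M] [Module F M] {V : ι → M}
    (hV : LinearIndependent F V) (s : Finset κ) (e : κ → ι)
    (he : ∀ x ∈ s, ∀ y ∈ s, e x = e y → x = y) (g : κ → F)
    (hsum : ∑ j ∈ s, g j • V (e j) = 0) : ∀ j ∈ s, g j = 0 := by
  classical
  set G : ι → F := fun i => if h : ∃ j, j ∈ s ∧ e j = i then g h.choose else 0 with hG
  have hGe : ∀ j' ∈ s, G (e j') = g j' := by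
    intro j' hj'
    have hex : ∃ j, j ∈ s ∧ e j = e j' := ⟨j', hj', rfl⟩
    rw [hG]
    simp only [dif_pos hex]
    have h1 := hex.choose_spec
    rw [he _ h1.1 _ hj' h1.2]
  have hs : ∑ i ∈ s.image e, G i • V i = 0 := by
    rw [Finset.sum_image he, Finset.sum_congr rfl fun j hj => by rw [hGe j hj]]
    exact hsum
  intro j hj
  have := linearIndependent_iff'.mp hV (s.image e) G hs (e j) (Finset.mem_image_of_mem e hj)
  rw [hGe j hj] at this
  exact this

lemma LI_Xzpow : LinearIndependent F (fun m : ℤ => (RatFunc.X : RatFunc F) ^ m) := by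
  rw [linearIndependent_iff']
  intro s g hsum i hi
  classical
  set N : ℕ := s.sup fun k => (-k).toNat with hN
  have hNk : ∀ k ∈ s, 0 ≤ k + N := by
    intro k hk
    have h1 : (-k) ≤ ((-k).toNat : ℤ) := Int.self_le_toNat _
    have h2 : ((-k).toNat : ℤ) ≤ (N : ℤ) := by
      exact_mod_cast Finset.le_sup (f := fun k => (-k).toNat) hk
    omega
  have hmul := congrArg (fun y => y * (RatFunc.X : RatFunc F) ^ (N : ℤ)) hsum
  simp only [Finset.sum_mul, smul_mul_assoc, zero_mul] at hmul
  have hmul2 : ∑ k ∈ s,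
      (algebraMap (Polynomial F) (RatFunc F)) (Polynomial.C (g k) * Polynomial.X ^ (k + N).toNat)
        = 0 := by
    rw [← hmul]
    refine Finset.sum_congr rfl fun k hk => ?_
    rw [map_mul, map_pow, RatFunc.algebraMap_X,
      ← zpow_natCast (RatFunc.X : RatFunc F) ((k + N).toNat),
      Int.toNat_of_nonneg (hNk k hk), zpow_add₀ RatFunc.X_ne_zero,
      Algebra.smul_def, IsScalarTower.algebraMap_eq F (Polynomial F) (RatFunc F)]
    rw [RingHom.comp_apply,
      show (algebraMap F (Polynomial F)) (g k) = Polynomial.C (g k) from rfl]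
  rw [← map_sum] at hmul2
  have hpoly : ∑ k ∈ s, Polynomial.C (g k) * Polynomial.X ^ (k + N).toNat = 0 := by
    apply RatFunc.algebraMap_injective F
    rw [map_zero]
    exact hmul2
  have h3 : ∑ k ∈ s,
      (Polynomial.C (g k) * Polynomial.X ^ (k + N).toNat).coeff ((i + N).toNat) = 0 := by
    rw [← Polynomial.finset_sum_coeff, hpoly, Polynomial.coeff_zero]
  rw [Finset.sum_eq_single i (fun k hk hne => ?_) (fun h => absurd hi h)] at h3
  · rw [Polynomial.coeff_C_mul, Polynomial.coeff_X_pow, if_pos rfl, mul_one] at h3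
    exact h3
  · rw [Polynomial.coeff_C_mul, Polynomial.coeff_X_pow, if_neg, mul_zero]
    have e1 := hNk k hk
    have e2 := hNk i hi
    omega

variable {q : F}

lemma hq_zpow_lt (hq0 : q ≠ 0) (hq : ∀ n : ℕ, 0 < n → q ^ n ≠ 1)
    {a b : ℤ} (hab : a < b) (h : q ^ a = q ^ b) : False := by
  have h1 : q ^ (b - a) = 1 := by
    rw [zpow_sub₀ hq0, ← h, div_self (zpow_ne_zero _ hq0)]
  have h2 : q ^ ((b - a).toNat) = 1 := by
    rw [← zpow_natCast q ((b - a).toNat), Int.toNat_of_nonneg (by omega : (0:ℤ) ≤ b - a)]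
    exact h1
  exact hq (b - a).toNat (by omega) h2

lemma hq_zpow_inj (hq0 : q ≠ 0) (hq : ∀ n : ℕ, 0 < n → q ^ n ≠ 1) :
    Function.Injective fun m : ℤ => q ^ m := by
  intro m m' h
  simp only at h
  rcases lt_trichotomy m m' with hlt | heq | hlt
  · exact absurd h (fun h => hq_zpow_lt hq0 hq hlt h)
  · exact heq
  · exact absurd h.symm (fun h => hq_zpow_lt hq0 hq hlt h)

lemma LI_char (hq0 : q ≠ 0) (hq : ∀ n : ℕ, 0 < n → q ^ n ≠ 1) :
    LinearIndependent F (fun m : ℤ => ⇑(powersHom F (q ^ m))) := by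
  refine (linearIndependent_monoidHom (Multiplicative ℕ) F).comp
    (fun m : ℤ => powersHom F (q ^ m)) ?_
  intro m m' h
  have h2 := congrArg (fun χ : Multiplicative ℕ →* F => χ (Multiplicative.ofAdd 1)) h
  simp only [powersHom_apply, toAdd_ofAdd, pow_one] at h2
  exact hq_zpow_inj hq0 hq h2

variable {ϖ : RatFunc F ≃ₐ[F] RatFunc F}

set_option maxHeartbeats 1000000 in
lemma Wind (hq0 : q ≠ 0) (hq : ∀ n : ℕ, 0 < n → q ^ n ≠ 1)
    (hϖ : ϖ RatFunc.X = algebraMap F (RatFunc F) q * RatFunc.X)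
    {ι : Type*} (s : Finset ι) (k b : ι → ℤ)
    (hinj : ∀ x ∈ s, ∀ y ∈ s, k x = k y → b x = b y → x = y) (g : ι → F)
    (hsum : ∑ i ∈ s, g i • W ϖ 1 (k i) (b i) = 0) : ∀ i ∈ s, g i = 0 := by
  classical
  intro i hi
  have hn : ∀ n : ℕ, ∑ j ∈ s,
      (g j * (q ^ (b j)) ^ n) • ((RatFunc.X : RatFunc F) ^ (k j + (n : ℤ))) = 0 := by
    intro n
    have h0 := LinearMap.congr_fun hsum ((RatFunc.X : RatFunc F) ^ n)
    rw [LinearMap.zero_apply, LinearMap.sum_apply] at h0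
    rw [← h0]
    refine Finset.sum_congr rfl fun j hj => ?_
    rw [LinearMap.smul_apply, W_apply, map_one, one_mul, map_pow, zpow_X hq0 hϖ, mul_pow,
      ← map_pow, Algebra.smul_def, Algebra.smul_def, zpow_add₀ RatFunc.X_ne_zero,
      zpow_natCast, map_mul]
    ring
  have hk0 : ∀ n : ℕ, ∑ j ∈ s.filter (fun j => k j = k i), g j * (q ^ (b j)) ^ n = 0 := by
    intro n
    have hfib := Finset.sum_fiberwise_of_maps_to (g := k) (t := s.image k)
      (fun j hj => Finset.mem_image_of_mem k hj)
      (fun j => (g j * (q ^ (b j)) ^ n) • ((RatFunc.X : RatFunc F) ^ (k j + (n : ℤ))))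
    rw [hn n] at hfib
    have hfib2 : ∑ κ0 ∈ s.image k,
        (∑ j ∈ s.filter (fun j => k j = κ0), g j * (q ^ (b j)) ^ n) •
          ((RatFunc.X : RatFunc F) ^ (κ0 + (n : ℤ))) = 0 := by
      rw [← hfib]
      refine Finset.sum_congr rfl fun κ0 _ => ?_
      rw [Finset.sum_smul]
      refine Finset.sum_congr rfl fun j hj => ?_
      rw [(Finset.mem_filter.mp hj).2]
    exact LIfiber LI_Xzpow (s.image k) (fun κ0 => κ0 + (n : ℤ))
      (fun x _ y _ h => by exact add_right_cancel h) _ hfib2 (k i)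
      (Finset.mem_image_of_mem k hi)
  have hchar : ∑ j ∈ s.filter (fun j => k j = k i), g j • ⇑(powersHom F (q ^ (b j))) = 0 := by
    funext x
    rw [show ((0 : Multiplicative ℕ → F) x) = 0 from rfl]
    rw [Finset.sum_apply]
    simp only [Pi.smul_apply, powersHom_apply, smul_eq_mul]
    exact hk0 (Multiplicative.toAdd x)
  have hbinj : ∀ x ∈ s.filter (fun j => k j = k i), ∀ y ∈ s.filter (fun j => k j = k i),
      b x = b y → x = y := by
    intro x hx y hy h
    have hx1 := Finset.mem_filter.mp hx
    have hy1 := Finset.mem_filter.mp hy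
    exact hinj x hx1.1 y hy1.1 (hx1.2.trans hy1.2.symm) h
  have hb := LIfiber (M := Multiplicative ℕ → F) (ι := ℤ)
    (V := fun m : ℤ => ⇑(powersHom F (q ^ m))) (LI_char hq0 hq)
    (s.filter (fun j => k j = k i)) b hbinj g hchar
  exact hb i (Finset.mem_filter.mpr ⟨hi, rfl⟩)

end Indep


section Values

variable {q : F} {ϖ : RatFunc F ≃ₐ[F] RatFunc F}

lemma vimg0_eq : vimg F q ϖ 0 = LinearMap.mulLeft F (RatFunc.X : RatFunc F) := by
  apply LinearMap.ext; intro f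
  rw [show vimg F q ϖ 0 = W ϖ 1 1 0 from rfl, W_apply]
  simp

lemma vimg1_eq : vimg F q ϖ 1 = LinearMap.mulLeft F (RatFunc.X : RatFunc F)⁻¹ := by
  apply LinearMap.ext; intro f
  rw [show vimg F q ϖ 1 = W ϖ 1 (-1) 0 from rfl, W_apply]
  simp [zpow_neg_one]

lemma vimg2_eq : vimg F q ϖ 2
    = LinearMap.mulLeft F (-(algebraMap F (RatFunc F) q)⁻¹ * ((RatFunc.X : RatFunc F) ^ 2)⁻¹)
        ∘ₗ ϖ.toLinearMap := by
  apply LinearMap.ext; intro f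
  rw [show vimg F q ϖ 2 = W ϖ (-q⁻¹) (-2) 1 from rfl, W_apply]
  rw [show (LinearMap.mulLeft F (-(algebraMap F (RatFunc F) q)⁻¹ *
      ((RatFunc.X : RatFunc F) ^ 2)⁻¹) ∘ₗ ϖ.toLinearMap) f
    = -(algebraMap F (RatFunc F) q)⁻¹ * ((RatFunc.X : RatFunc F) ^ 2)⁻¹ * ϖ f from rfl]
  rw [zpow_one, map_neg, map_inv₀]
  norm_num [zpow_neg]

lemma vimg4_eq : vimg F q ϖ 4
    = LinearMap.mulLeft F (-(algebraMap F (RatFunc F) q)⁻¹ * (RatFunc.X : RatFunc F) ^ 2)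
        ∘ₗ ϖ.symm.toLinearMap := by
  apply LinearMap.ext; intro f
  rw [show vimg F q ϖ 4 = W ϖ (-q⁻¹) 2 (-1) from rfl, W_apply]
  rw [show (LinearMap.mulLeft F (-(algebraMap F (RatFunc F) q)⁻¹ *
      (RatFunc.X : RatFunc F) ^ 2) ∘ₗ ϖ.symm.toLinearMap) f
    = -(algebraMap F (RatFunc F) q)⁻¹ * (RatFunc.X : RatFunc F) ^ 2 * ϖ.symm f from rfl]
  rw [zpow_neg_one, show (ϖ⁻¹ : RatFunc F ≃ₐ[F] RatFunc F) f = ϖ.symm f from rfl,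
    map_neg, map_inv₀]
  norm_num

end Values

end CoulombAux

theorem coulomb_embedding_injective
    (F : Type*) [Field F] [CharZero F] (q z : F) (hq0 : q ≠ 0)
    (hq : ∀ n : ℕ, 0 < n → q ^ n ≠ 1)
    (ϖ : RatFunc F ≃ₐ[F] RatFunc F)
    (hϖ : ϖ RatFunc.X = algebraMap F (RatFunc F) q * RatFunc.X) :
    let X : RatFunc F := RatFunc.X
    let c : F → RatFunc F := algebraMap F (RatFunc F)
    let mk : FreeAlgebra F (Fin 6) →ₐ[F] RingQuot (Rel9 F q) :=
      RingQuot.mkAlgHom F (Rel9 F q)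
    ∃ φ : RingQuot (Rel9 F q) →ₐ[F] Module.End F (RatFunc F),
      Function.Injective φ ∧
      φ (mk (g9 F 0)) = LinearMap.mulLeft F X ∧
      φ (mk (g9 F 1)) = LinearMap.mulLeft F X⁻¹ ∧
      φ (mk (g9 F 2)) = LinearMap.mulLeft F (-(c q)⁻¹ * (X ^ 2)⁻¹) ∘ₗ ϖ.toLinearMap ∧
      φ (mk (g9 F 4)) = LinearMap.mulLeft F (-(c q)⁻¹ * X ^ 2) ∘ₗ ϖ.symm.toLinearMap := by
  classical
  intro X c mk
  refine ⟨CoulombAux.Φ hq0 hϖ, ?_, ?_, ?_, ?_, ?_⟩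
  · -- injectivity
    rw [injective_iff_map_eq_zero]
    intro x hx
    obtain ⟨l, hl⟩ := Finsupp.mem_span_range_iff_exists_finsupp.mp (CoulombAux.P9_top hq0 x)
    choose ν hν0 hνW using CoulombAux.EDu_zpow hq0 hϖ
    set Φm : RingQuot (Rel9 F q) →* Module.End F (RatFunc F) :=
      ((CoulombAux.Φ hq0 hϖ).toRingHom).toMonoidHom with hΦm
    have key : ∀ a b : ℤ, CoulombAux.Φ hq0 hϖ (CoulombAux.Mz F q a b)
        = (ν b) • CoulombAux.W ϖ 1 (a - 2 * b) b := by
      intro a b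
      have h1 : Units.map Φm (CoulombAux.uu F q) = CoulombAux.OXu hq0 hϖ := by
        apply Units.ext
        rw [Units.coe_map]
        exact CoulombAux.Φ_mk hq0 hϖ 0
      have h2 : Units.map Φm (CoulombAux.dd F q) = CoulombAux.EDu hq0 hϖ := by
        apply Units.ext
        rw [Units.coe_map]
        exact CoulombAux.Φ_mk hq0 hϖ 2
      have hu : CoulombAux.Φ hq0 hϖ ((CoulombAux.uu F q ^ a : _ˣ) : RingQuot (Rel9 F q))
          = CoulombAux.W ϖ 1 a 0 := by
        calc CoulombAux.Φ hq0 hϖ ((CoulombAux.uu F q ^ a : _ˣ) : RingQuot (Rel9 F q))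
            = ((Units.map Φm (CoulombAux.uu F q ^ a) : _ˣ) : Module.End F (RatFunc F)) :=
              (Units.coe_map _ _).symm
          _ = (((Units.map Φm (CoulombAux.uu F q)) ^ a : _ˣ) : Module.End F (RatFunc F)) := by
              rw [map_zpow]
          _ = ((CoulombAux.OXu hq0 hϖ ^ a : _ˣ) : Module.End F (RatFunc F)) := by rw [h1]
          _ = CoulombAux.W ϖ 1 a 0 := CoulombAux.OXu_zpow hq0 hϖ a
      have hd : CoulombAux.Φ hq0 hϖ ((CoulombAux.dd F q ^ b : _ˣ) : RingQuot (Rel9 F q))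
          = CoulombAux.W ϖ (ν b) (-(2 * b)) b := by
        calc CoulombAux.Φ hq0 hϖ ((CoulombAux.dd F q ^ b : _ˣ) : RingQuot (Rel9 F q))
            = ((Units.map Φm (CoulombAux.dd F q ^ b) : _ˣ) : Module.End F (RatFunc F)) :=
              (Units.coe_map _ _).symm
          _ = (((Units.map Φm (CoulombAux.dd F q)) ^ b : _ˣ) : Module.End F (RatFunc F)) := by
              rw [map_zpow]
          _ = ((CoulombAux.EDu hq0 hϖ ^ b : _ˣ) : Module.End F (RatFunc F)) := by rw [h2]
          _ = CoulombAux.W ϖ (ν b) (-(2 * b)) b := hνW b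
      rw [CoulombAux.Mz, map_mul, hu, hd, CoulombAux.W_mul hq0 hϖ]
      rw [CoulombAux.W_congr ϖ (show 1 * (ν b * q ^ ((0:ℤ) * -(2 * b))) = ν b by
          rw [zero_mul, zpow_zero, mul_one, one_mul])
        (show a + -(2 * b) = a - 2 * b by ring) (show (0:ℤ) + b = b by ring)]
      exact CoulombAux.W_smul (ν b) (a - 2 * b) b
    have h0 : ∑ p ∈ l.support, (l p * ν p.2) • CoulombAux.W ϖ 1 (p.1 - 2 * p.2) p.2 = 0 := by
      have e1 : CoulombAux.Φ hq0 hϖ x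
          = l.sum fun p μ => (μ * ν p.2) • CoulombAux.W ϖ 1 (p.1 - 2 * p.2) p.2 := by
        rw [← hl, map_finsuppSum]
        refine Finsupp.sum_congr fun p _ => ?_
        rw [map_smul, key, smul_smul]
      have e2 : l.sum (fun p μ => (μ * ν p.2) • CoulombAux.W ϖ 1 (p.1 - 2 * p.2) p.2)
          = ∑ p ∈ l.support, (l p * ν p.2) • CoulombAux.W ϖ 1 (p.1 - 2 * p.2) p.2 := rfl
      rw [← e2, ← e1, hx]
    have hz := CoulombAux.Wind hq0 hq hϖ l.support (fun p => p.1 - 2 * p.2) (fun p => p.2)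
      (fun x hx' y hy' h1 h2 => by
        cases x; cases y
        simp only at h1 h2 ⊢
        simp only [Prod.mk.injEq]
        omega)
      (fun p => l p * ν p.2) h0
    have hl0 : l = 0 := by
      ext p
      rw [Finsupp.coe_zero, Pi.zero_apply]
      by_cases hp : p ∈ l.support
      · exact (mul_eq_zero.mp (hz p hp)).resolve_right (hν0 p.2)
      · exact Finsupp.notMem_support_iff.mp hp
    rw [← hl, hl0, Finsupp.sum_zero_index]
  · rw [show mk (g9 F 0) = RingQuot.mkAlgHom F (Rel9 F q) (g9 F 0) from rfl,
      CoulombAux.Φ_mk hq0 hϖ 0]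
    exact CoulombAux.vimg0_eq
  · rw [show mk (g9 F 1) = RingQuot.mkAlgHom F (Rel9 F q) (g9 F 1) from rfl,
      CoulombAux.Φ_mk hq0 hϖ 1]
    exact CoulombAux.vimg1_eq
  · rw [show mk (g9 F 2) = RingQuot.mkAlgHom F (Rel9 F q) (g9 F 2) from rfl,
      CoulombAux.Φ_mk hq0 hϖ 2]
    exact CoulombAux.vimg2_eq
  · rw [show mk (g9 F 4) = RingQuot.mkAlgHom F (Rel9 F q) (g9 F 4) from rfl,
      CoulombAux.Φ_mk hq0 hϖ 4]
    exact CoulombAux.vimg4_eq
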